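/- Let T be the 2k-regular tree (Cayley graph of the free group on k generators with symmetric generating set S of size 2k), let μ_X be the standard random walk, and let G be a finite connected graph with all degrees in [3,d], N vertices, and girth g. For q < g/2, every path p⃗ of length q in G starting at p₀ reduces (by cancelling backtracks) to a unique simple path p⃗' joining its endpoints, and the expected induced walk satisfies: the expectation over uniformly random symmetric S^j-labelings α of the measure μ^q_{G,α}(x→·) (defined by μ^q_{G,α}(x→x') = ∑_{|p⃗|=q} ν_G(p₀)μ_G^q(p⃗)·1(xα(p⃗)=x')) equals the convex combination ∑_{l=0}^{q} P_G^q(l)·μ_X^{jl}(x→·), where P_G^q(l) is the probability that q steps of the stationary walk on G end at graph distance exactly l from the start. -/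

import Mathlib

open Finset

/-- The element of the free group on `k` generators spelled by a word of length `j` in the
generators and their inverses. -/
def wordOf {k j : ℕ} (w : Fin j → Fin k × Bool) : FreeGroup (Fin k) :=
  ((List.ofFn w).map fun s => if s.2 then FreeGroup.of s.1 else (FreeGroup.of s.1)⁻¹).prod

open Classical in
/-- The `m`-step transition probability of the standard random walk on the Cayley graph of
the free group on `k` generators (the `2k`-regular tree). -/
noncomputable def treeWalk (k m : ℕ) (x x' : FreeGroup (Fin k)) : ℝ :=
  ((Finset.univ.filter fun w : Fin m → Fin k × Bool => x * wordOf w = x').card : ℝ) /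
    (2 * k) ^ m

/-- The symmetric `S^j`-labeling determined by the i.i.d. choices `β` on oriented edges
`(u,v)` with `u < v`; the opposite orientation gets the inverse word. -/
def lab {V : Type*} [LinearOrder V] {k j : ℕ} (β : V → V → Fin j → Fin k × Bool)
    (u v : V) : FreeGroup (Fin k) :=
  if u < v then wordOf (β u v) else (wordOf (β v u))⁻¹

/-- The product of the labels read along a path `p` of length `q`. -/
def pathWord {V : Type*} [LinearOrder V] {k j q : ℕ} (β : V → V → Fin j → Fin k × Bool)
    (p : Fin (q + 1) → V) : FreeGroup (Fin k) :=
  ((List.ofFn fun i : Fin q => lab β (p i.castSucc) (p i.succ))).prod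

/-- The stationary measure `ν_G(u) = deg(u)/(2|E|)` of the simple random walk. -/
noncomputable def nuG {V : Type*} [Fintype V] (G : SimpleGraph V) [DecidableRel G.Adj]
    (u : V) : ℝ :=
  (G.degree u : ℝ) / ∑ v, (G.degree v : ℝ)

/-- The probability that the simple random walk follows the given vertex sequence. -/
noncomputable def pathProb {V : Type*} [Fintype V] (G : SimpleGraph V) [DecidableRel G.Adj]
    {q : ℕ} (p : Fin (q + 1) → V) : ℝ :=
  ∏ i : Fin q, if G.Adj (p i.castSucc) (p i.succ) then (G.degree (p i.castSucc) : ℝ)⁻¹ else 0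

open Classical in
/-- The induced random walk `μ^q_{G,α}(x → x')` on the tree, for the labeling given by `β`. -/
noncomputable def indWalk {V : Type*} [Fintype V] [LinearOrder V] (G : SimpleGraph V)
    [DecidableRel G.Adj] (k j q : ℕ) (β : V → V → Fin j → Fin k × Bool)
    (x x' : FreeGroup (Fin k)) : ℝ :=
  ∑ p : Fin (q + 1) → V,
    nuG G (p 0) * pathProb G p * (if x * pathWord β p = x' then 1 else 0)

open Classical in
/-- `P_G^q(l)`: the probability that `q` steps of the stationary simple random walk on `G`
end at graph distance exactly `l` from the starting point. -/
noncomputable def travelProb {V : Type*} [Fintype V] (G : SimpleGraph V)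
    [DecidableRel G.Adj] (q l : ℕ) : ℝ :=
  ∑ p : Fin (q + 1) → V,
    nuG G (p 0) * pathProb G p * (if G.dist (p 0) (p (Fin.last q)) = l then 1 else 0)

namespace Stmt16Aux

open SimpleGraph

/-! ### Words -/

def wordList {k : ℕ} (L : List (Fin k × Bool)) : FreeGroup (Fin k) :=
  (L.map fun s => if s.2 then FreeGroup.of s.1 else (FreeGroup.of s.1)⁻¹).prod

lemma wordOf_eq_wordList {k j : ℕ} (w : Fin j → Fin k × Bool) :
    wordOf w = wordList (List.ofFn w) := rfl

lemma wordList_append {k : ℕ} (L₁ L₂ : List (Fin k × Bool)) :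
    wordList (L₁ ++ L₂) = wordList L₁ * wordList L₂ := by
  simp [wordList]

lemma wordOf_append {k m n : ℕ} (a : Fin m → Fin k × Bool) (b : Fin n → Fin k × Bool) :
    wordOf (Fin.append a b) = wordOf a * wordOf b := by
  rw [wordOf_eq_wordList, List.ofFn_fin_append, wordList_append, wordOf_eq_wordList,
    wordOf_eq_wordList]

def invFn {k m : ℕ} (w : Fin m → Fin k × Bool) : Fin m → Fin k × Bool :=
  fun i => ((w i.rev).1, !(w i.rev).2)

lemma invFn_involutive {k m : ℕ} : Function.Involutive (invFn (k := k) (m := m)) := by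
  intro w; funext i; simp [invFn, Fin.rev_rev]

lemma wordList_inv {k : ℕ} (L : List (Fin k × Bool)) :
    wordList ((L.map fun s => (s.1, !s.2)).reverse) = (wordList L)⁻¹ := by
  induction L with
  | nil => simp [wordList]
  | cons s t ih =>
    obtain ⟨a, b⟩ := s
    simp only [List.map_cons, List.reverse_cons, wordList_append, ih]
    cases b <;> simp [wordList, mul_inv_rev]

lemma ofFn_rev {α : Type*} {m : ℕ} (w : Fin m → α) :
    (List.ofFn fun i => w i.rev) = (List.ofFn w).reverse := by
  induction m with
  | zero => simp
  | succ m ih =>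
    rw [List.ofFn_succ, List.ofFn_succ' w]
    simp only [Fin.rev_zero, Fin.rev_succ]
    rw [ih (fun i => w i.castSucc)]
    simp [List.concat_eq_append]

lemma wordOf_invFn {k m : ℕ} (w : Fin m → Fin k × Bool) : wordOf (invFn w) = (wordOf w)⁻¹ := by
  rw [wordOf_eq_wordList, wordOf_eq_wordList, ← wordList_inv]
  congr 1
  rw [List.map_ofFn, ← ofFn_rev]
  rfl

/-- Ordered product of group elements indexed by `Fin l`. -/
def finProd {M : Type*} [Monoid M] {l : ℕ} (g : Fin l → M) : M := (List.ofFn g).prod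

@[simp] lemma finProd_zero {M : Type*} [Monoid M] (g : Fin 0 → M) : finProd g = 1 := by
  simp [finProd]

lemma finProd_succ {M : Type*} [Monoid M] {l : ℕ} (g : Fin (l + 1) → M) :
    finProd g = g 0 * finProd (fun i => g i.succ) := by
  simp [finProd, List.ofFn_succ]

open Classical in
noncomputable def tcount (k m : ℕ) (x x' : FreeGroup (Fin k)) : ℝ :=
  ∑ w : Fin m → Fin k × Bool, if x * wordOf w = x' then (1:ℝ) else 0

lemma tcount_add (k m m' : ℕ) (x x' : FreeGroup (Fin k)) :
    tcount k (m + m') x x' = ∑ w₁ : Fin m → Fin k × Bool, tcount k m' (x * wordOf w₁) x' := by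
  classical
  rw [tcount, ← Equiv.sum_comp (Fin.appendEquiv m m' (α := Fin k × Bool))]
  rw [Fintype.sum_prod_type]
  refine Finset.sum_congr rfl fun w₁ _ => ?_
  rw [tcount]
  refine Finset.sum_congr rfl fun w₂ _ => ?_
  have : x * wordOf ((Fin.appendEquiv m m') (w₁, w₂)) = x * wordOf w₁ * wordOf w₂ := by
    show x * wordOf (Fin.append w₁ w₂) = _
    rw [wordOf_append, mul_assoc]
  rw [this]

lemma tcount_eq (k m : ℕ) (x x' : FreeGroup (Fin k)) :
    tcount k m x x' =
      ((Finset.univ.filter fun w : Fin m → Fin k × Bool => x * wordOf w = x').card : ℝ) := by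
  classical
  rw [tcount, Finset.sum_boole]

lemma prodcount (k j : ℕ) (x' : FreeGroup (Fin k)) :
    ∀ (l : ℕ) (x : FreeGroup (Fin k)),
      (∑ f : Fin l → (Fin j → Fin k × Bool),
        if x * finProd (fun i => wordOf (f i)) = x' then (1:ℝ) else 0) = tcount k (j * l) x x' := by
  classical
  intro l
  induction l with
  | zero =>
    intro x
    rw [Nat.mul_zero]
    simp [tcount, wordOf]
  | succ l ih =>
    intro x
    have hm : j * (l + 1) = j + j * l := by ring
    rw [hm, tcount_add]
    rw [← Equiv.sum_comp (Fin.consEquiv (fun _ : Fin (l + 1) => Fin j → Fin k × Bool))]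
    rw [Fintype.sum_prod_type]
    refine Finset.sum_congr rfl fun w₀ _ => ?_
    rw [← ih (x * wordOf w₀)]
    refine Finset.sum_congr rfl fun f _ => ?_
    have : finProd (fun i => wordOf
          ((Fin.consEquiv (fun _ : Fin (l+1) => Fin j → Fin k × Bool)) (w₀, f) i))
        = wordOf w₀ * finProd (fun i => wordOf (f i)) := by
      rw [finProd_succ]
      simp [Fin.consEquiv]
    rw [this, ← mul_assoc]

/-! ### Words along walks -/

variable {V : Type*} [LinearOrder V] {k j : ℕ} {G : SimpleGraph V}

lemma lab_mul_lab (β : V → V → Fin j → Fin k × Bool) {u v : V} (huv : u ≠ v) :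
    lab β u v * lab β v u = 1 := by
  rcases huv.lt_or_gt with h | h
  · rw [lab, lab, if_pos h, if_neg (asymm h), mul_inv_cancel]
  · rw [lab, lab, if_neg (asymm h), if_pos h, inv_mul_cancel]

def wordOfWalk (β : V → V → Fin j → Fin k × Bool) {u v : V} (w : G.Walk u v) :
    FreeGroup (Fin k) :=
  (w.darts.map fun d => lab β d.toProd.1 d.toProd.2).prod

@[simp] lemma wordOfWalk_nil (β : V → V → Fin j → Fin k × Bool) {u : V} :
    wordOfWalk β (Walk.nil : G.Walk u u) = 1 := rfl

@[simp] lemma wordOfWalk_cons (β : V → V → Fin j → Fin k × Bool) {u a v : V}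
    (h : G.Adj u a) (p : G.Walk a v) :
    wordOfWalk β (Walk.cons h p) = lab β u a * wordOfWalk β p := by
  simp [wordOfWalk]

@[simp] lemma wordOfWalk_copy (β : V → V → Fin j → Fin k × Bool) {u v u' v' : V}
    (p : G.Walk u v) (hu : u = u') (hv : v = v') :
    wordOfWalk β (p.copy hu hv) = wordOfWalk β p := by
  subst hu; subst hv; rfl

/-! ### Non-backtracking walks and reduction -/

/-- Non-backtracking predicate on walks. -/
def NB : ∀ {u v : V}, G.Walk u v → Prop
  | _, _, .nil => True
  | _, _, .cons _ .nil => True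
  | u, _, @Walk.cons _ _ _ _ _ _h (@Walk.cons _ _ _ b _ h' p) =>
      b ≠ u ∧ NB (Walk.cons h' p)

lemma NB.of_cons {u a v : V} (h : G.Adj u a) (p : G.Walk a v) (hnb : NB (Walk.cons h p)) :
    NB p := by
  cases p with
  | nil => trivial
  | cons h' q => exact hnb.2

/-- One step of backtrack-removal at the head. -/
def step {u a v : V} (h : G.Adj u a) : G.Walk a v → G.Walk u v
  | .nil => Walk.cons h Walk.nil
  | @Walk.cons _ _ _ b _ h' p =>
      if hb : b = u then p.copy hb rfl else Walk.cons h (Walk.cons h' p)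

def reduce : ∀ {u v : V}, G.Walk u v → G.Walk u v
  | _, _, .nil => .nil
  | _, _, .cons h p => step h (reduce p)

lemma length_step_le {u a v : V} (h : G.Adj u a) (r : G.Walk a v) :
    (step h r).length ≤ r.length + 1 := by
  cases r with
  | nil => simp [step]
  | cons h' p =>
    rw [step]
    split
    · simp [Walk.length_copy]; omega
    · simp

lemma wordOfWalk_step (β : V → V → Fin j → Fin k × Bool) {u a v : V} (h : G.Adj u a)
    (r : G.Walk a v) : wordOfWalk β (step h r) = lab β u a * wordOfWalk β r := by
  cases r with
  | nil => simp [step]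
  | cons h' p =>
    rw [step]
    split
    · rename_i hb
      subst hb
      rw [Walk.copy_rfl_rfl, wordOfWalk_cons, ← mul_assoc, lab_mul_lab β h.ne, one_mul]
    · simp

lemma NB_step {u a v : V} (h : G.Adj u a) (r : G.Walk a v) (hr : NB r) : NB (step h r) := by
  cases r with
  | nil => trivial
  | cons h' p =>
    rw [step]
    split
    · rename_i hb
      subst hb
      rw [Walk.copy_rfl_rfl]
      exact NB.of_cons h' p hr
    · exact ⟨by assumption, hr⟩

lemma length_reduce_le {u v : V} (w : G.Walk u v) : (reduce w).length ≤ w.length := by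
  induction w with
  | nil => simp [reduce]
  | cons h p ih =>
    rw [reduce]
    calc (step h (reduce p)).length ≤ (reduce p).length + 1 := length_step_le h _
    _ ≤ p.length + 1 := by omega
    _ = (Walk.cons h p).length := by simp

lemma wordOfWalk_reduce (β : V → V → Fin j → Fin k × Bool) {u v : V} (w : G.Walk u v) :
    wordOfWalk β (reduce w) = wordOfWalk β w := by
  induction w with
  | nil => rfl
  | cons h p ih => rw [reduce, wordOfWalk_step, ih, wordOfWalk_cons]

lemma NB_reduce {u v : V} (w : G.Walk u v) : NB (reduce w) := by
  induction w with
  | nil => trivial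
  | cons h p ih => exact NB_step h _ ih

/-! ### Uniqueness of short paths -/

lemma path_unique_aux {n : ℕ}
    (hcyc : ∀ (a : V) (c : G.Walk a a), c.IsCycle → n < c.length) :
    ∀ {u v : V} (p₁ : G.Walk u v) (p₂ : G.Walk u v), p₁.IsPath → p₂.IsPath →
      p₁.length + p₂.length ≤ n → p₁ = p₂ := by
  intro u v p₁
  induction p₁ with
  | nil =>
    intro p₂ _ h₂ _
    exact (Walk.isPath_iff_eq_nil.mp h₂).symm
  | @cons u a v h t₁ ih =>
    intro p₂ hp₁ hp₂ hlen
    cases p₂ with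
    | nil => exact absurd (Walk.isPath_iff_eq_nil.mp hp₁) (by simp)
    | @cons _ b _ h₂ t₂ =>
      obtain ⟨ht₁, hu₁⟩ := (Walk.cons_isPath_iff _ _).mp hp₁
      obtain ⟨ht₂, hu₂⟩ := (Walk.cons_isPath_iff _ _).mp hp₂
      by_cases hab : a = b
      · subst hab
        have := ih t₂ ht₁ ht₂ (by simp only [Walk.length_cons] at hlen; omega)
        rw [this]
      · by_cases hmem : a ∈ (Walk.cons h₂ t₂).support
        · exfalso
          have hQpath : ((Walk.cons h₂ t₂).takeUntil a hmem).IsPath := hp₂.takeUntil hmem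
          have hQlen : ((Walk.cons h₂ t₂).takeUntil a hmem).length ≤ (Walk.cons h₂ t₂).length :=
            Walk.length_takeUntil_le _ hmem
          have hcycle : (Walk.cons h ((Walk.cons h₂ t₂).takeUntil a hmem).reverse).IsCycle := by
            rw [Walk.cons_isCycle_iff]
            refine ⟨hQpath.reverse, fun hedge => ?_⟩
            rw [Walk.edges_reverse, List.mem_reverse] at hedge
            have := Walk.edges_takeUntil_subset (Walk.cons h₂ t₂) hmem hedge
            rw [Walk.edges_cons, List.mem_cons] at this
            rcases this with heq | hmem2
            · rw [Sym2.eq_iff] at heq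
              rcases heq with ⟨-, rfl⟩ | ⟨rfl, rfl⟩
              · exact hab rfl
              · exact G.irrefl h
            · exact hu₂ (Walk.fst_mem_support_of_mem_edges t₂ hmem2)
          have hlt := hcyc u _ hcycle
          simp only [Walk.length_cons, Walk.length_reverse] at hlt hlen hQlen
          omega
        · have hp' : (Walk.cons h.symm (Walk.cons h₂ t₂)).IsPath := hp₂.cons hmem
          have heq := ih (Walk.cons h.symm (Walk.cons h₂ t₂)) ht₁ hp'
            (by simp only [Walk.length_cons] at hlen ⊢; omega)
          exact absurd (heq ▸ (by simp : u ∈ (Walk.cons h.symm (Walk.cons h₂ t₂)).support)) hu₁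

lemma nb_isPath {q : ℕ} (hcyc : ∀ (a : V) (c : G.Walk a a), c.IsCycle → 2 * q < c.length) :
    ∀ {u v : V} (w : G.Walk u v), NB w → w.length ≤ q → w.IsPath := by
  intro u v w
  induction w with
  | nil => intro _ _; exact Walk.IsPath.nil
  | @cons u a v h p ih =>
    intro hnb hlen
    simp only [Walk.length_cons] at hlen
    have hp : p.IsPath := ih (NB.of_cons h p hnb) (by omega)
    rw [Walk.cons_isPath_iff]
    refine ⟨hp, fun hu => ?_⟩
    have hQ : (p.takeUntil u hu).IsPath := hp.takeUntil hu
    have hQl : (p.takeUntil u hu).length ≤ p.length := Walk.length_takeUntil_le _ hu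
    have e1 : (Walk.cons h.symm Walk.nil : G.Walk a u).IsPath :=
      Walk.IsPath.nil.cons (by simp [h.ne'])
    have hQe : p.takeUntil u hu = Walk.cons h.symm Walk.nil :=
      path_unique_aux hcyc _ _ hQ e1 (by simp only [Walk.length_cons, Walk.length_nil]; omega)
    have hspec := Walk.take_spec p hu
    rw [hQe, Walk.cons_append, Walk.nil_append] at hspec
    rw [← hspec] at hnb
    exact hnb.1 rfl

/-! ### From vertex sequences to walks -/

/-- Build a walk from a vertex sequence with adjacency. -/
def toWalk (G : SimpleGraph V) : ∀ (n : ℕ) (p : Fin (n + 1) → V),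
    (∀ i : Fin n, G.Adj (p i.castSucc) (p i.succ)) → G.Walk (p 0) (p (Fin.last n))
  | 0, p, _ => Walk.nil
  | n + 1, p, hadj =>
    (Walk.cons (v := p ((0 : Fin (n + 1)).succ))
      (by have := hadj 0; rwa [Fin.castSucc_zero] at this)
      (toWalk G n (fun i => p i.succ)
        (fun i => by have := hadj i.succ; rwa [← Fin.succ_castSucc] at this))).copy rfl
      (congrArg p (Fin.succ_last n))

lemma toWalk_length (n : ℕ) (p : Fin (n + 1) → V)
    (hadj : ∀ i : Fin n, G.Adj (p i.castSucc) (p i.succ)) :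
    (toWalk G n p hadj).length = n := by
  induction n with
  | zero => rfl
  | succ n ih =>
    rw [toWalk]
    simp only [Walk.length_copy, Walk.length_cons]
    rw [ih]

lemma toWalk_word (β : V → V → Fin j → Fin k × Bool) :
    ∀ (n : ℕ) (p : Fin (n + 1) → V) (hadj : ∀ i : Fin n, G.Adj (p i.castSucc) (p i.succ)),
      wordOfWalk β (toWalk G n p hadj) = pathWord β p := by
  intro n
  induction n with
  | zero => intro p hadj; simp [toWalk, pathWord, wordOfWalk]
  | succ n ih =>
    intro p hadj
    rw [toWalk, wordOfWalk_copy, wordOfWalk_cons, ih]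
    rw [pathWord, pathWord, List.ofFn_succ, List.prod_cons]
    simp only [Fin.castSucc_zero, Fin.succ_castSucc]

/-! ### The key counting lemma -/

lemma map_prod_eq {γ : Type*} {M : Type*} [Monoid M] (L : List γ) (f : γ → M) :
    (L.map f).prod = finProd (fun i : Fin L.length => f (L.get i)) := by
  rw [finProd]
  congr 1
  conv_lhs => rw [← List.ofFn_get L]
  rw [List.map_ofFn]
  rfl

lemma key [Fintype V] (hk : 1 ≤ k) {u v : V} (r : G.Walk u v) (hr : r.IsPath) (x x' : FreeGroup (Fin k)) :
    ∑ β : V → V → Fin j → Fin k × Bool, (if x * wordOfWalk β r = x' then (1:ℝ) else 0)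
      = (Fintype.card (V → V → Fin j → Fin k × Bool) : ℝ) * treeWalk k (j * r.length) x x' := by
  classical
  set W := (Fin j → Fin k × Bool) with hW
  set L := r.darts with hLdef
  set l := L.length with hldef
  -- the ordered endpoints of the i-th dart
  set pts : Fin l → V × V := fun i =>
    if (L.get i).toProd.1 < (L.get i).toProd.2 then (L.get i).toProd
    else ((L.get i).toProd.2, (L.get i).toProd.1) with hpts
  set g : Fin l → W → FreeGroup (Fin k) := fun i w =>
    if (L.get i).toProd.1 < (L.get i).toProd.2 then wordOf w else (wordOf w)⁻¹ with hg
  have hlab : ∀ (β : V → V → W) (i : Fin l),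
      lab β (L.get i).toProd.1 (L.get i).toProd.2 = g i (β (pts i).1 (pts i).2) := by
    intro β i
    by_cases hlt : (L.get i).toProd.1 < (L.get i).toProd.2
    · simp only [lab, hpts, hg, if_pos hlt]
    · simp only [lab, hpts, hg, if_neg hlt]
  have hword : ∀ β : V → V → W, wordOfWalk β r
      = finProd (fun i => g i (β (pts i).1 (pts i).2)) := by
    intro β
    rw [wordOfWalk, ← hLdef, map_prod_eq]
    exact congrArg finProd (funext fun i => hlab β i)
  -- injectivity of pts
  have hinj : Function.Injective pts := by
    intro i i' hii
    have hedge : (L.get i).edge = (L.get i').edge := by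
      rw [Dart.edge, Dart.edge]
      simp only [hpts] at hii
      split_ifs at hii <;>
      · obtain ⟨h1, h2⟩ := Prod.ext_iff.mp hii
        rw [← Prod.mk.eta (p := (L.get i).toProd), ← Prod.mk.eta (p := (L.get i').toProd),
          Sym2.eq_iff]
        tauto
    have hnodup : (L.map Dart.edge).Nodup := hr.edges_nodup
    have hinj' := List.nodup_iff_injective_get.mp hnodup
    have : i.val = i'.val := by
      have hi : i.val < (L.map Dart.edge).length := by simp; exact i.isLt
      have hi' : i'.val < (L.map Dart.edge).length := by simp; exact i'.isLt
      have := hinj' (a₁ := ⟨i.val, hi⟩) (a₂ := ⟨i'.val, hi'⟩) (by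
        simp only [List.get_eq_getElem, List.getElem_map]
        exact hedge)
      simpa using congrArg Fin.val this
    exact Fin.ext this
  -- decompose the sum over β
  set P : V × V → Prop := fun c => c ∈ Set.range pts with hP
  let eR : Fin l ≃ {c : V × V // P c} :=
    Equiv.ofBijective (fun i : Fin l => (⟨pts i, Set.mem_range_self i⟩ : {c : V × V // P c}))
      ⟨fun a b hab => hinj (congrArg Subtype.val hab), by
        rintro ⟨c, i, rfl⟩; exact ⟨i, rfl⟩⟩
  let e : (V → V → W) ≃ (Fin l → W) × ({c : V × V // ¬ P c} → W) :=
    ((Equiv.curry (V) (V) W).symm).trans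
      ((Equiv.piEquivPiSubtypeProd P (fun _ => W)).trans
        (Equiv.prodCongr (Equiv.arrowCongr eR.symm (Equiv.refl W))
          (Equiv.refl _)))
  have he : ∀ (β : V → V → W) (i : Fin l), (e β).1 i = β (pts i).1 (pts i).2 := fun β i => rfl
  have hsum1 : (∑ β : V → V → W, (if x * wordOfWalk β r = x' then (1:ℝ) else 0))
      = ∑ p : (Fin l → W) × ({c : V × V // ¬ P c} → W),
          (if x * finProd (fun i => g i (p.1 i)) = x' then (1:ℝ) else 0) := by
    rw [← Equiv.sum_comp e.symm (fun β => if x * wordOfWalk β r = x' then (1:ℝ) else 0)]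
    refine Finset.sum_congr rfl fun p _ => ?_
    rw [hword]
    have hev : ∀ i, (e.symm p) (pts i).1 (pts i).2 = p.1 i := fun i => by
      rw [← he (e.symm p) i, Equiv.apply_symm_apply]
    rw [show (fun i => g i ((e.symm p) (pts i).1 (pts i).2)) = fun i => g i (p.1 i) from
      funext fun i => congrArg (g i) (hev i)]
  rw [hsum1, Fintype.sum_prod_type]
  have hconst : ∀ f : Fin l → W,
      (∑ _gg : ({c : V × V // ¬ P c} → W),
        (if x * finProd (fun i => g i (f i)) = x' then (1:ℝ) else 0))
      = (Fintype.card ({c : V × V // ¬ P c} → W) : ℝ) *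
          (if x * finProd (fun i => g i (f i)) = x' then (1:ℝ) else 0) := fun f => by
    rw [Finset.sum_const, Finset.card_univ, nsmul_eq_mul]
  rw [Finset.sum_congr rfl (fun f _ => hconst f), ← Finset.mul_sum]
  set σ : Fin l → Equiv.Perm W := fun i =>
    if (L.get i).toProd.1 < (L.get i).toProd.2 then Equiv.refl W
    else ⟨invFn, invFn, fun w => invFn_involutive w, fun w => invFn_involutive w⟩ with hσ
  have hgσ : ∀ (i : Fin l) (w : W), g i w = wordOf (σ i w) := by
    intro i w
    by_cases hlt : (L.get i).toProd.1 < (L.get i).toProd.2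
    · simp only [hg, hσ, if_pos hlt, Equiv.refl_apply]
    · simp only [hg, hσ, if_neg hlt, Equiv.coe_fn_mk, wordOf_invFn]
  have hchg : (∑ f : Fin l → W, if x * finProd (fun i => g i (f i)) = x' then (1:ℝ) else 0)
      = ∑ f : Fin l → W, if x * finProd (fun i => wordOf (f i)) = x' then (1:ℝ) else 0 := by
    rw [← Equiv.sum_comp (Equiv.piCongrRight σ)
      (fun f => if x * finProd (fun i => wordOf (f i)) = x' then (1:ℝ) else 0)]
    refine Finset.sum_congr rfl fun f _ => ?_
    rw [show (fun i => wordOf ((Equiv.piCongrRight σ) f i)) = fun i => g i (f i) from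
      funext fun i => (hgσ i (f i)).symm]
  rw [hchg, prodcount k j x' l x]
  have hcardeq : Fintype.card (V → V → W)
      = Fintype.card (Fin l → W) * Fintype.card ({c : V × V // ¬ P c} → W) :=
    (Fintype.card_congr e).trans (Fintype.card_prod _ _)
  have hk' : (0:ℝ) < 2 * (k:ℝ) := by
    have : (1:ℝ) ≤ (k:ℝ) := by exact_mod_cast hk
    linarith
  have hWcard : (Fintype.card (Fin l → W) : ℝ) = (2 * (k:ℝ)) ^ (j * l) := by
    have h1 : Fintype.card (Fin l → W) = (2 * k) ^ (j * l) := by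
      show Fintype.card (Fin l → (Fin j → Fin k × Bool)) = (2 * k) ^ (j * l)
      rw [Fintype.card_fun, Fintype.card_fun, Fintype.card_prod, Fintype.card_fin,
        Fintype.card_bool, Fintype.card_fin, ← pow_mul]
      simp only [Fintype.card_fin]
      ring
    rw [h1]
    push_cast
    ring
  have hlr : r.length = l := (Walk.length_darts r).symm
  rw [hlr, treeWalk, ← tcount_eq, hcardeq]
  push_cast [hWcard]
  field_simp

end Stmt16Aux

open Stmt16Aux

/-- For `q < girth/2`: (i) any two paths of length `≤ q` with the same endpoints coincide
(unique reduction to a simple path), and (ii) the expectation over uniformly random symmetric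
`S^j`-labelings of the induced walk `μ^q_{G,α}(x→x')` equals the convex combination
`∑_{l=0}^{q} P_G^q(l)·μ_X^{jl}(x→x')` of tree walks. -/
theorem stmt16 {V : Type*} [Fintype V] [LinearOrder V] (G : SimpleGraph V)
    [DecidableRel G.Adj] (hconn : G.Connected) (d k j q : ℕ)
    (hdeg : ∀ v, 3 ≤ G.degree v ∧ G.degree v ≤ d) (hk : 1 ≤ k) (hj : 1 ≤ j)
    (hgirth : (2 * q : ℕ∞) < G.girth) (x x' : FreeGroup (Fin k)) :
    (∀ (u v : V) (w₁ w₂ : G.Walk u v), w₁.IsPath → w₂.IsPath →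
      w₁.length ≤ q → w₂.length ≤ q → w₁ = w₂) ∧
    (∑ β : V → V → Fin j → Fin k × Bool, indWalk G k j q β x x') /
        (Fintype.card (V → V → Fin j → Fin k × Bool) : ℝ) =
      ∑ l ∈ Finset.range (q + 1), travelProb G q l * treeWalk k (j * l) x x' := by
  classical
  have hcyc : ∀ (a : V) (c : G.Walk a a), c.IsCycle → 2 * q < c.length := by
    intro a c hc
    have h1 : G.egirth ≤ c.length := SimpleGraph.le_egirth.mp le_rfl a c hc
    have h2 : ((2 * q : ℕ) : ℕ∞) < G.egirth := by
      have hle : ((G.girth : ℕ) : ℕ∞) ≤ G.egirth := by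
        rw [SimpleGraph.girth]
        exact ENat.coe_toNat_le_self _
      refine lt_of_lt_of_le ?_ hle
      exact_mod_cast hgirth
    have h3 := h2.trans_le h1
    exact_mod_cast h3
  have part1 : ∀ (u v : V) (w₁ w₂ : G.Walk u v), w₁.IsPath → w₂.IsPath →
      w₁.length ≤ q → w₂.length ≤ q → w₁ = w₂ := fun u v w₁ w₂ h1 h2 l1 l2 =>
    path_unique_aux hcyc w₁ w₂ h1 h2 (by omega)
  refine ⟨part1, ?_⟩
  have hnemp : Nonempty (V → V → Fin j → Fin k × Bool) :=
    ⟨fun _ _ _ => (⟨0, hk⟩, true)⟩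
  have hcard0 : (0:ℝ) < (Fintype.card (V → V → Fin j → Fin k × Bool) : ℝ) := by
    exact_mod_cast Fintype.card_pos
  have hterm : ∀ p : Fin (q + 1) → V,
      (∑ β : V → V → Fin j → Fin k × Bool,
        nuG G (p 0) * pathProb G p * (if x * pathWord β p = x' then (1:ℝ) else 0))
      = (Fintype.card (V → V → Fin j → Fin k × Bool) : ℝ) *
          (nuG G (p 0) * pathProb G p *
            (if G.dist (p 0) (p (Fin.last q)) ∈ Finset.range (q + 1) then
              treeWalk k (j * G.dist (p 0) (p (Fin.last q))) x x' else 0)) := by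
    intro p
    by_cases hprob : pathProb G p = 0
    · simp [hprob]
    · have hadj : ∀ i : Fin q, G.Adj (p i.castSucc) (p i.succ) := by
        intro i
        by_contra hno
        exact hprob (Finset.prod_eq_zero (Finset.mem_univ i) (by rw [if_neg hno]))
      have hrlen : (reduce (toWalk G q p hadj)).length ≤ q := by
        have := length_reduce_le (toWalk G q p hadj)
        rwa [toWalk_length] at this
      have hrpath := nb_isPath hcyc _ (NB_reduce (toWalk G q p hadj)) hrlen
      obtain ⟨pp, hpp, hppl⟩ := hconn.exists_path_of_dist (p 0) (p (Fin.last q))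
      have hdistle : G.dist (p 0) (p (Fin.last q)) ≤ q := by
        have := SimpleGraph.dist_le (toWalk G q p hadj)
        rwa [toWalk_length] at this
      have hre : reduce (toWalk G q p hadj) = pp :=
        part1 _ _ _ pp hrpath hpp hrlen (by rw [hppl]; exact hdistle)
      have hdist : G.dist (p 0) (p (Fin.last q)) = (reduce (toWalk G q p hadj)).length := by
        rw [hre, hppl]
      have hword : ∀ β : V → V → Fin j → Fin k × Bool,
          pathWord β p = wordOfWalk β (reduce (toWalk G q p hadj)) := by
        intro β
        rw [wordOfWalk_reduce, toWalk_word]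
      calc (∑ β : V → V → Fin j → Fin k × Bool,
            nuG G (p 0) * pathProb G p * (if x * pathWord β p = x' then (1:ℝ) else 0))
          = nuG G (p 0) * pathProb G p * ∑ β : V → V → Fin j → Fin k × Bool,
              (if x * wordOfWalk β (reduce (toWalk G q p hadj)) = x' then (1:ℝ) else 0) := by
            rw [Finset.mul_sum]
            exact Finset.sum_congr rfl fun β _ => by rw [hword β]
        _ = nuG G (p 0) * pathProb G p *
            ((Fintype.card (V → V → Fin j → Fin k × Bool) : ℝ) *
              treeWalk k (j * (reduce (toWalk G q p hadj)).length) x x') := by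
            rw [key hk _ hrpath]
        _ = (Fintype.card (V → V → Fin j → Fin k × Bool) : ℝ) *
            (nuG G (p 0) * pathProb G p *
              (if G.dist (p 0) (p (Fin.last q)) ∈ Finset.range (q + 1) then
                treeWalk k (j * G.dist (p 0) (p (Fin.last q))) x x' else 0)) := by
            rw [← hdist, if_pos (Finset.mem_range.mpr (by omega))]
            ring
  have hRHS : (∑ l ∈ Finset.range (q + 1), travelProb G q l * treeWalk k (j * l) x x')
      = ∑ p : Fin (q + 1) → V, nuG G (p 0) * pathProb G p *
          (if G.dist (p 0) (p (Fin.last q)) ∈ Finset.range (q + 1) then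
            treeWalk k (j * G.dist (p 0) (p (Fin.last q))) x x' else 0) := by
    rw [Finset.sum_congr rfl (fun l _ => by rw [travelProb, Finset.sum_mul])]
    rw [Finset.sum_comm]
    refine Finset.sum_congr rfl fun p _ => ?_
    have hstep : ∀ l, (nuG G (p 0) * pathProb G p *
          (if G.dist (p 0) (p (Fin.last q)) = l then (1:ℝ) else 0)) * treeWalk k (j * l) x x'
        = if G.dist (p 0) (p (Fin.last q)) = l then
            nuG G (p 0) * pathProb G p * treeWalk k (j * l) x x' else 0 := by
      intro l
      split
      · ring
      · ring
    rw [Finset.sum_congr rfl fun l _ => hstep l]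
    rw [Finset.sum_ite_eq (Finset.range (q + 1)) _
      (fun l => nuG G (p 0) * pathProb G p * treeWalk k (j * l) x x')]
    rw [mul_ite, mul_zero]
  have hLHS : (∑ β : V → V → Fin j → Fin k × Bool, indWalk G k j q β x x')
      = (Fintype.card (V → V → Fin j → Fin k × Bool) : ℝ) *
        ∑ p : Fin (q + 1) → V, nuG G (p 0) * pathProb G p *
          (if G.dist (p 0) (p (Fin.last q)) ∈ Finset.range (q + 1) then
            treeWalk k (j * G.dist (p 0) (p (Fin.last q))) x x' else 0) := by
    simp only [indWalk]
    rw [Finset.sum_comm]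
    rw [Finset.sum_congr rfl (fun p _ => hterm p), ← Finset.mul_sum]
  rw [hLHS, hRHS]
  rw [mul_comm, mul_div_assoc, div_self (ne_of_gt hcard0), mul_one]
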